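/- For every w ∈ Λ₊ one has Σ_{n=0}^∞ |w^{(n)}(w)|² < ∞; consequently K_w(z) = Σ_{n=0}^∞ z^{(n)}(z)·conj(w^{(n)}(w)) converges absolutely for every z ∈ Λ₊, K_w belongs to H₂(Λ₊) with coefficients K̂_w(n) = conj(w^{(n)}(w)), and for every f ∈ H₂(Λ₊), ⟨f, K_w⟩ = f(w). Thus H₂(Λ₊) is a reproducing kernel Hilbert space with reproducing kernel K_w(z). -/

import Mathlib

open Complex Finset GaussianInt

noncomputable section

/-- The lattice point `i` in the Gaussian integers. -/
def ii : GaussianInt := ⟨0, 1⟩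

/-- `f` is discrete analytic on the whole lattice `Λ = ℤ + iℤ`. -/
def DAnalytic (f : GaussianInt → ℂ) : Prop :=
  ∀ z : GaussianInt,
    (f (z + 1 + ii) - f z) / (1 + Complex.I) = (f (z + 1) - f (z + ii)) / (1 - Complex.I)

/-- `f` is discrete analytic on the right half lattice `Λ₊ = {z : Re z ≥ 0}`. -/
def DAnalyticOn (f : GaussianInt → ℂ) : Prop :=
  ∀ z : GaussianInt, 0 ≤ z.re →
    (f (z + 1 + ii) - f z) / (1 + Complex.I) = (f (z + 1) - f (z + ii)) / (1 - Complex.I)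

/-- `γ 0, γ 1, …, γ n` is a path in the lattice from `a` to `b`:
consecutive points are at distance `1`. -/
def IsPath (γ : ℕ → GaussianInt) (n : ℕ) (a b : GaussianInt) : Prop :=
  γ 0 = a ∧ γ n = b ∧ ∀ k < n, ‖(γ (k + 1) : ℂ) - (γ k : ℂ)‖ = 1

/-- The discrete integral `∫_γ f δz` along the path `γ 0, …, γ n`. -/
def discInt (f : GaussianInt → ℂ) (γ : ℕ → GaussianInt) (n : ℕ) : ℂ :=
  ∑ k ∈ Finset.range n, ((f (γ k) + f (γ (k + 1))) / 2) * ((γ (k + 1) : ℂ) - (γ k : ℂ))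

/-- The canonical lattice path from `0` to `z`: first along the real axis, then vertically. -/
def cpath (z : GaussianInt) (k : ℕ) : GaussianInt :=
  ⟨z.re.sign * ((min k z.re.natAbs : ℕ) : ℤ),
   z.im.sign * ((min k (z.re.natAbs + z.im.natAbs) - z.re.natAbs : ℕ) : ℤ)⟩

/-- The length of the canonical path from `0` to `z`. -/
def cpathLen (z : GaussianInt) : ℕ := z.re.natAbs + z.im.natAbs

/-- The operator `Z`: `Zf(z) = (f(0) - f(z))/2 + ∫_0^z f δz`, the integral being taken
along the canonical path (for discrete analytic `f` the integral is path-independent). -/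
def Zop (f : GaussianInt → ℂ) : GaussianInt → ℂ := fun z =>
  (f 0 - f z) / 2 + discInt f (cpath z) (cpathLen z)

/-- The basic discrete analytic polynomials `z⁽ⁿ⁾ = Zⁿ1`. -/
def zpoly (n : ℕ) : GaussianInt → ℂ := Zop^[n] (fun _ => 1)

/-- `α₊ = (1+i)/2`. -/
def aPlus : ℂ := (1 + Complex.I) / 2
/-- `α₋ = (1-i)/2`. -/
def aMinus : ℂ := (1 - Complex.I) / 2

/-- The difference operator `δx`. -/
def dxOp (f : GaussianInt → ℂ) : GaussianInt → ℂ := fun z => f (z + 1) - f z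
/-- The difference operator `δy`. -/
def dyOp (f : GaussianInt → ℂ) : GaussianInt → ℂ := fun z => f (z + ii) - f z

/-- `f` belongs to the Hardy space `H₂(Λ₊)` with coefficient sequence `c`:
`f(z) = Σ c(n) z⁽ⁿ⁾(z)` on `Λ₊` and `Σ |c(n)|² < ∞`. -/
def MemH2 (f : GaussianInt → ℂ) (c : ℕ → ℂ) : Prop :=
  Summable (fun n => ‖c n‖ ^ 2) ∧
  ∀ z : GaussianInt, 0 ≤ z.re → HasSum (fun n => c n * zpoly n z) (f z)


lemma natAbs_sign_mul_cast (x : ℤ) (m : ℕ) (hm : m ≤ x.natAbs) :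
    (x.sign * (m : ℤ)).natAbs = m := by
  by_cases hx : x = 0
  · subst hx; simp at hm ⊢; omega
  · rw [Int.natAbs_mul, Int.natAbs_sign_of_ne_zero hx, one_mul, Int.natAbs_natCast]

lemma sign_sign_mul_cast (x : ℤ) (m : ℕ) (hm : m ≠ 0) :
    (x.sign * (m : ℤ)).sign = x.sign := by
  rcases lt_trichotomy x 0 with h | h | h
  · rw [Int.sign_eq_neg_one_of_neg h, neg_one_mul, Int.sign_neg,
      Int.sign_natCast_of_ne_zero hm]
  · simp [h]
  · rw [Int.sign_eq_one_of_pos h, one_mul, Int.sign_natCast_of_ne_zero hm]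

lemma cpath_zero (w : GaussianInt) : cpath w 0 = 0 := by
  ext <;> simp [cpath]

lemma cpath_self (w : GaussianInt) : cpath w (cpathLen w) = w := by
  have h1 : min (cpathLen w) w.re.natAbs = w.re.natAbs := by unfold cpathLen; omega
  have h2 : min (cpathLen w) (w.re.natAbs + w.im.natAbs) - w.re.natAbs = w.im.natAbs := by
    unfold cpathLen; omega
  ext
  · show w.re.sign * _ = w.re
    rw [h1, Int.sign_mul_natAbs]
  · show w.im.sign * _ = w.im
    rw [h2, Int.sign_mul_natAbs]

lemma cpathLen_cpath (w : GaussianInt) (k : ℕ) (hk : k ≤ cpathLen w) :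
    cpathLen (cpath w k) = k := by
  unfold cpathLen at *
  show (w.re.sign * _).natAbs + (w.im.sign * _).natAbs = k
  rw [natAbs_sign_mul_cast _ _ (by omega), natAbs_sign_mul_cast _ _ (by omega)]
  omega

lemma cpath_cpath (w : GaussianInt) (k j : ℕ) (hk : k ≤ cpathLen w) (hj : j ≤ k) :
    cpath (cpath w k) j = cpath w j := by
  unfold cpathLen at hk
  set a := w.re.natAbs with ha
  set b := w.im.natAbs with hb
  set A := min k a with hA
  set B := min k (a + b) - a with hB
  have hAa : A ≤ a := by omega
  have hBb : B ≤ b := by omega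
  have hre : (cpath w k).re = w.re.sign * (A : ℤ) := rfl
  have him : (cpath w k).im = w.im.sign * (B : ℤ) := rfl
  have hreabs : (cpath w k).re.natAbs = A := by rw [hre, natAbs_sign_mul_cast _ _ hAa]
  have himabs : (cpath w k).im.natAbs = B := by rw [him, natAbs_sign_mul_cast _ _ hBb]
  ext
  · show (cpath w k).re.sign * ((min j (cpath w k).re.natAbs : ℕ) : ℤ)
      = w.re.sign * ((min j a : ℕ) : ℤ)
    rw [hreabs]
    by_cases hA0 : A = 0
    · have : min j a = 0 := by omega
      rw [hA0, this]; simp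
    · rw [hre, sign_sign_mul_cast _ _ hA0]
      congr 1
      omega
  · show (cpath w k).im.sign *
        ((min j ((cpath w k).re.natAbs + (cpath w k).im.natAbs) - (cpath w k).re.natAbs : ℕ) : ℤ)
      = w.im.sign * ((min j (a + b) - a : ℕ) : ℤ)
    rw [hreabs, himabs]
    by_cases hB0 : B = 0
    · have h1 : min j (A + B) - A = 0 := by omega
      have h2 : min j (a + b) - a = 0 := by omega
      rw [h1, h2]; simp
    · rw [him, sign_sign_mul_cast _ _ hB0]
      congr 1
      omega

lemma zpoly_zero_fun (z : GaussianInt) : zpoly 0 z = 1 := by simp [zpoly]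

lemma zpoly_succ (n : ℕ) : zpoly (n + 1) = Zop (zpoly n) := by
  rw [zpoly, Function.iterate_succ_apply', zpoly]

lemma Zop_at_zero (f : GaussianInt → ℂ) : Zop f 0 = 0 := by
  have h : cpathLen (0 : GaussianInt) = 0 := rfl
  simp [Zop, discInt, h]

lemma zpoly_at_zero (n : ℕ) : zpoly (n + 1) 0 = 0 := by
  rw [zpoly_succ, Zop_at_zero]

/-- the `j`-th step of the canonical path of `w` -/
def stepc (w : GaussianInt) (j : ℕ) : ℂ := (cpath w (j + 1) : ℂ) - (cpath w j : ℂ)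

lemma stepc_eq (w : GaussianInt) (hw : 0 ≤ w.re) (j : ℕ) (hj : j < cpathLen w) :
    stepc w j = 1 ∨ stepc w j = Complex.I ∨ stepc w j = -Complex.I := by
  unfold cpathLen at hj
  set a := w.re.natAbs with ha
  set b := w.im.natAbs with hb
  have hre : w.re = (a : ℤ) := (Int.natAbs_of_nonneg hw).symm
  by_cases hja : j < a
  · left
    have h1 : cpath w j = ⟨(j : ℤ), 0⟩ := by
      have hsgn : w.re.sign = 1 := Int.sign_eq_one_of_pos (by omega)
      ext
      · show w.re.sign * ((min j a : ℕ) : ℤ) = (j : ℤ)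
        rw [hsgn]; have : min j a = j := by omega
        rw [this]; ring
      · show w.im.sign * ((min j (a + b) - a : ℕ) : ℤ) = 0
        have : min j (a + b) - a = 0 := by omega
        rw [this]; simp
    have h2 : cpath w (j + 1) = ⟨((j : ℤ) + 1), 0⟩ := by
      have hsgn : w.re.sign = 1 := Int.sign_eq_one_of_pos (by omega)
      ext
      · show w.re.sign * ((min (j + 1) a : ℕ) : ℤ) = (j : ℤ) + 1
        rw [hsgn]; have : min (j + 1) a = j + 1 := by omega
        rw [this]; push_cast; ring
      · show w.im.sign * ((min (j + 1) (a + b) - a : ℕ) : ℤ) = 0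
        have : min (j + 1) (a + b) - a = 0 := by omega
        rw [this]; simp
    rw [stepc, h1, h2, toComplex_def', toComplex_def']
    push_cast; ring
  · have hb0 : b ≠ 0 := by omega
    have him0 : w.im ≠ 0 := fun h => hb0 (by rw [hb, h]; rfl)
    have h1 : cpath w j = ⟨w.re, w.im.sign * ((j - a : ℕ) : ℤ)⟩ := by
      ext
      · show w.re.sign * ((min j a : ℕ) : ℤ) = w.re
        have : min j a = a := by omega
        rw [this, Int.sign_mul_natAbs]
      · show w.im.sign * ((min j (a + b) - a : ℕ) : ℤ) = w.im.sign * ((j - a : ℕ) : ℤ)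
        congr 2
        omega
    have h2 : cpath w (j + 1) = ⟨w.re, w.im.sign * ((j + 1 - a : ℕ) : ℤ)⟩ := by
      ext
      · show w.re.sign * ((min (j + 1) a : ℕ) : ℤ) = w.re
        have : min (j + 1) a = a := by omega
        rw [this, Int.sign_mul_natAbs]
      · show w.im.sign * ((min (j + 1) (a + b) - a : ℕ) : ℤ) = w.im.sign * ((j + 1 - a : ℕ) : ℤ)
        congr 2
        omega
    have hstep : stepc w j = (w.im.sign : ℂ) * Complex.I := by
      rw [stepc, h1, h2, toComplex_def', toComplex_def']
      have hj1 : ((j + 1 - a : ℕ) : ℤ) = ((j - a : ℕ) : ℤ) + 1 := by omega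
      rw [hj1]
      push_cast
      ring
    have hsgn : w.im.sign = 1 ∨ w.im.sign = -1 := by
      rcases lt_trichotomy w.im 0 with h | h | h
      · exact Or.inr (Int.sign_eq_neg_one_of_neg h)
      · exact absurd h him0
      · exact Or.inl (Int.sign_eq_one_of_pos h)
    rcases hsgn with h | h
    · right; left; rw [hstep, h]; push_cast; ring
    · right; right; rw [hstep, h]; push_cast; ring

lemma norm_stepc (w : GaussianInt) (hw : 0 ≤ w.re) (j : ℕ) (hj : j < cpathLen w) :
    ‖stepc w j‖ = 1 := by
  rcases stepc_eq w hw j hj with h | h | h <;> rw [h] <;> simp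

lemma norm_dd (w : GaussianInt) (hw : 0 ≤ w.re) (j : ℕ) (hj : j < cpathLen w) :
    ‖(stepc w j - 1) / 2‖ ≤ 3 / 4 := by
  have h1 : ‖(Complex.I - 1) / 2‖ ^ 2 = 1 / 2 := by
    rw [Complex.sq_norm]
    simp [Complex.normSq_apply]
    norm_num
  have h2 : ‖(-Complex.I - 1) / 2‖ ^ 2 = 1 / 2 := by
    rw [Complex.sq_norm]
    simp [Complex.normSq_apply]
    norm_num
  rcases stepc_eq w hw j hj with h | h | h <;> rw [h]
  · norm_num
  · nlinarith [norm_nonneg ((Complex.I - 1) / 2)]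
  · nlinarith [norm_nonneg ((-Complex.I - 1) / 2)]

lemma zpoly_rec (w : GaussianInt) (k n : ℕ) (hk : k + 1 ≤ cpathLen w) :
    zpoly (n + 1) (cpath w (k + 1)) =
      (stepc w k - 1) / 2 * zpoly n (cpath w (k + 1)) +
      ((zpoly n 0) / 2 +
        (∑ j ∈ Finset.range k,
          ((zpoly n (cpath w j) + zpoly n (cpath w (j + 1))) / 2) * stepc w j) +
        zpoly n (cpath w k) * stepc w k / 2) := by
  rw [zpoly_succ]
  show (zpoly n 0 - zpoly n (cpath w (k + 1))) / 2 +
      discInt (zpoly n) (cpath (cpath w (k + 1))) (cpathLen (cpath w (k + 1))) = _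
  rw [cpathLen_cpath w (k + 1) hk]
  have hsum : discInt (zpoly n) (cpath (cpath w (k + 1))) (k + 1) =
      ∑ j ∈ Finset.range (k + 1),
        ((zpoly n (cpath w j) + zpoly n (cpath w (j + 1))) / 2) * stepc w j := by
    unfold discInt
    apply Finset.sum_congr rfl
    intro j hj
    rw [Finset.mem_range] at hj
    rw [cpath_cpath w (k + 1) j hk (by omega), cpath_cpath w (k + 1) (j + 1) hk (by omega)]
    rfl
  rw [hsum, Finset.sum_range_succ]
  unfold stepc
  ring

lemma decay (w : GaussianInt) (hw : 0 ≤ w.re) :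
    ∀ k, k ≤ cpathLen w →
      ∃ C : ℝ, 0 ≤ C ∧ ∀ n, ‖zpoly n (cpath w k)‖ ≤ C * (4 / 5) ^ n := by
  intro k
  induction k using Nat.strong_induction_on with
  | _ k IH =>
    intro hk
    match k, IH with
    | 0, _ =>
      refine ⟨1, zero_le_one, fun n => ?_⟩
      rw [cpath_zero]
      cases n with
      | zero => simp [zpoly_zero_fun]
      | succ n => rw [zpoly_at_zero]; simp; positivity
    | k + 1, IH =>
      have hCex : ∀ j : ℕ, ∃ C : ℝ, 0 ≤ C ∧
          (j ≤ k → ∀ n, ‖zpoly n (cpath w j)‖ ≤ C * (4 / 5) ^ n) := by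
        intro j
        by_cases hj : j ≤ k
        · obtain ⟨C, hC0, hC⟩ := IH j (by omega) (by omega)
          exact ⟨C, hC0, fun _ => hC⟩
        · exact ⟨0, le_refl 0, fun h => absurd h hj⟩
      choose C hC0 hC using hCex
      set B : ℝ := C 0 / 2 + (∑ j ∈ Finset.range k, (C j + C (j + 1)) / 2) + C k / 2
        with hBdef
      have hB0 : 0 ≤ B := by
        have hs : 0 ≤ ∑ j ∈ Finset.range k, (C j + C (j + 1)) / 2 := by
          apply Finset.sum_nonneg
          intro j _
          have := hC0 j; have := hC0 (j + 1); linarith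
        have := hC0 0; have := hC0 k; rw [hBdef]; linarith
      have hg : ∀ n, ‖(zpoly n 0) / 2 +
          (∑ j ∈ Finset.range k,
            ((zpoly n (cpath w j) + zpoly n (cpath w (j + 1))) / 2) * stepc w j) +
          zpoly n (cpath w k) * stepc w k / 2‖ ≤ B * (4 / 5) ^ n := by
        intro n
        set p : ℝ := (4 / 5 : ℝ) ^ n with hpdef
        have hp : 0 ≤ p := by positivity
        have hv : ∀ j, j ≤ k → ‖zpoly n (cpath w j)‖ ≤ C j * p := fun j hj => hC j hj n
        have t1 : ‖zpoly n 0 / 2‖ ≤ C 0 * p / 2 := by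
          rw [norm_div]
          have h0 : ‖zpoly n 0‖ ≤ C 0 * p := by
            rw [← cpath_zero w]; exact hv 0 (by omega)
          have : ‖(2 : ℂ)‖ = 2 := by simp
          rw [this]
          linarith
        have t2 : ‖∑ j ∈ Finset.range k,
            ((zpoly n (cpath w j) + zpoly n (cpath w (j + 1))) / 2) * stepc w j‖ ≤
            (∑ j ∈ Finset.range k, (C j + C (j + 1)) / 2) * p := by
          calc ‖∑ j ∈ Finset.range k,
              ((zpoly n (cpath w j) + zpoly n (cpath w (j + 1))) / 2) * stepc w j‖
              ≤ ∑ j ∈ Finset.range k,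
                ‖((zpoly n (cpath w j) + zpoly n (cpath w (j + 1))) / 2) * stepc w j‖ :=
                norm_sum_le _ _
            _ ≤ ∑ j ∈ Finset.range k, ((C j + C (j + 1)) / 2) * p := by
                apply Finset.sum_le_sum
                intro j hj
                rw [Finset.mem_range] at hj
                rw [norm_mul, norm_stepc w hw j (by omega), mul_one, norm_div]
                have h2 : ‖(2 : ℂ)‖ = 2 := by simp
                rw [h2]
                have ha := hv j (by omega)
                have hb := hv (j + 1) (by omega)
                have := norm_add_le (zpoly n (cpath w j)) (zpoly n (cpath w (j + 1)))
                linarith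
            _ = (∑ j ∈ Finset.range k, (C j + C (j + 1)) / 2) * p := by
                rw [Finset.sum_mul]
        have t3 : ‖zpoly n (cpath w k) * stepc w k / 2‖ ≤ C k * p / 2 := by
          rw [norm_div, norm_mul, norm_stepc w hw k (by omega), mul_one]
          have h2 : ‖(2 : ℂ)‖ = 2 := by simp
          rw [h2]
          have := hv k (by omega)
          linarith
        have tri : ‖(zpoly n 0) / 2 +
            (∑ j ∈ Finset.range k,
              ((zpoly n (cpath w j) + zpoly n (cpath w (j + 1))) / 2) * stepc w j) +
            zpoly n (cpath w k) * stepc w k / 2‖ ≤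
            ‖(zpoly n 0) / 2‖ +
            ‖∑ j ∈ Finset.range k,
              ((zpoly n (cpath w j) + zpoly n (cpath w (j + 1))) / 2) * stepc w j‖ +
            ‖zpoly n (cpath w k) * stepc w k / 2‖ := norm_add₃_le
        have hBp : B * p = C 0 * p / 2 +
            (∑ j ∈ Finset.range k, (C j + C (j + 1)) / 2) * p + C k * p / 2 := by
          rw [hBdef]; ring
        linarith
      refine ⟨1 + 20 * B, by linarith, fun n => ?_⟩
      induction n with
      | zero => simp [zpoly_zero_fun]; linarith
      | succ n IHn =>
        rw [zpoly_rec w k n hk]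
        have h1 := norm_add_le ((stepc w k - 1) / 2 * zpoly n (cpath w (k + 1)))
          ((zpoly n 0) / 2 +
            (∑ j ∈ Finset.range k,
              ((zpoly n (cpath w j) + zpoly n (cpath w (j + 1))) / 2) * stepc w j) +
            zpoly n (cpath w k) * stepc w k / 2)
        rw [norm_mul] at h1
        have h2 := hg n
        have h3 : ‖(stepc w k - 1) / 2‖ ≤ 3 / 4 := norm_dd w hw k (by omega)
        have hp : (0 : ℝ) ≤ (4 / 5 : ℝ) ^ n := by positivity
        have h5 : ‖(stepc w k - 1) / 2‖ * ‖zpoly n (cpath w (k + 1))‖ ≤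
            (3 / 4) * ((1 + 20 * B) * (4 / 5) ^ n) :=
          mul_le_mul h3 IHn (norm_nonneg _) (by norm_num)
        have hpow : (4 / 5 : ℝ) ^ (n + 1) = (4 / 5) ^ n * (4 / 5) := pow_succ _ _
        rw [hpow]
        nlinarith [mul_nonneg hB0 hp]

lemma zpoly_bound (w : GaussianInt) (hw : 0 ≤ w.re) :
    ∃ C : ℝ, 0 ≤ C ∧ ∀ n, ‖zpoly n w‖ ≤ C * (4 / 5) ^ n := by
  obtain ⟨C, hC0, hC⟩ := decay w hw (cpathLen w) le_rfl
  rw [cpath_self] at hC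
  exact ⟨C, hC0, hC⟩

lemma summable_sq (w : GaussianInt) (hw : 0 ≤ w.re) :
    Summable (fun n : ℕ => ‖zpoly n w‖ ^ 2) := by
  obtain ⟨C, hC0, hC⟩ := zpoly_bound w hw
  have hgeo : Summable (fun n : ℕ => C ^ 2 * (16 / 25 : ℝ) ^ n) :=
    (summable_geometric_of_lt_one (by norm_num) (by norm_num)).mul_left _
  refine Summable.of_nonneg_of_le (fun n => sq_nonneg _) (fun n => ?_) hgeo
  have h1 : ‖zpoly n w‖ ^ 2 ≤ (C * (4 / 5) ^ n) ^ 2 :=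
    pow_le_pow_left₀ (_root_.norm_nonneg _) (hC n) 2
  calc ‖zpoly n w‖ ^ 2 ≤ (C * (4 / 5) ^ n) ^ 2 := h1
    _ = C ^ 2 * (16 / 25) ^ n := by
        rw [mul_pow, ← pow_mul, mul_comm n 2, pow_mul]
        norm_num

lemma summable_prod (z w : GaussianInt) (hz : 0 ≤ z.re) (hw : 0 ≤ w.re) :
    Summable (fun n : ℕ => ‖zpoly n z * (starRingEnd ℂ) (zpoly n w)‖) := by
  have h1 := summable_sq z hz
  have h2 := summable_sq w hw
  have hg : Summable (fun n => (‖zpoly n z‖ ^ 2 + ‖zpoly n w‖ ^ 2) / 2) :=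
    (h1.add h2).div_const 2
  refine Summable.of_nonneg_of_le (fun n => _root_.norm_nonneg _) (fun n => ?_) hg
  rw [norm_mul, RCLike.norm_conj]
  nlinarith [sq_nonneg (‖zpoly n z‖ - ‖zpoly n w‖)]

/-- For `w ∈ Λ₊`, `Σ |w⁽ⁿ⁾(w)|² < ∞`; hence the kernel
`K_w(z) = Σ z⁽ⁿ⁾(z) conj (w⁽ⁿ⁾(w))` converges absolutely on `Λ₊`, `K_w ∈ H₂(Λ₊)` with
coefficients `conj (w⁽ⁿ⁾(w))`, and `⟨f, K_w⟩ = f(w)` for every `f ∈ H₂(Λ₊)`: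
`H₂(Λ₊)` is a reproducing kernel Hilbert space with kernel `K_w`. -/
theorem stmt12 (w : GaussianInt) (hw : 0 ≤ w.re) :
    Summable (fun n : ℕ => ‖zpoly n w‖ ^ 2) ∧
    (∀ z : GaussianInt, 0 ≤ z.re →
      Summable (fun n : ℕ => ‖zpoly n z * (starRingEnd ℂ) (zpoly n w)‖)) ∧
    MemH2 (fun z => ∑' n : ℕ, zpoly n z * (starRingEnd ℂ) (zpoly n w))
      (fun n => (starRingEnd ℂ) (zpoly n w)) ∧
    ∀ (f : GaussianInt → ℂ) (c : ℕ → ℂ), MemH2 f c →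
      HasSum (fun n : ℕ => c n * (starRingEnd ℂ) ((starRingEnd ℂ) (zpoly n w))) (f w) := by
  refine ⟨summable_sq w hw, fun z hz => summable_prod z w hz hw, ⟨?_, ?_⟩, ?_⟩
  · have : (fun n : ℕ => ‖(starRingEnd ℂ) (zpoly n w)‖ ^ 2) =
        fun n : ℕ => ‖zpoly n w‖ ^ 2 := by
      funext n; rw [RCLike.norm_conj]
    rw [this]
    exact summable_sq w hw
  · intro z hz
    have hsum : Summable (fun n : ℕ => zpoly n z * (starRingEnd ℂ) (zpoly n w)) :=
      (summable_prod z w hz hw).of_norm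
    have heq : (fun n : ℕ => (starRingEnd ℂ) (zpoly n w) * zpoly n z) =
        fun n : ℕ => zpoly n z * (starRingEnd ℂ) (zpoly n w) := by
      funext n; ring
    rw [heq]
    exact hsum.hasSum
  · rintro f c ⟨hc1, hc2⟩
    simpa using hc2 w hw

end
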